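/- Consequently, the metric entropy of the transformer class T_N = {clip_B ∘ f̌_Θ : Θ ∈ S_N × F_N} satisfies V(T_N, ||·||_{L∞}, ε) ≲ N² log(B'_N²/ε) + V(F_N, ||·||_{L∞}, ε/(D B'_N √N)) for some constant D > 0 and all sufficiently small ε > 0. -/

import Mathlib

open Matrix

noncomputable def matOpNorm {N : ℕ} (M : Matrix (Fin N) (Fin N) ℝ) : ℝ :=
  ‖Matrix.toEuclideanCLM (𝕜 := ℝ) M‖

/-- The set `S_N = {Γ : 0 ⪯ Γ ⪯ C₂ I_N}`. -/
def SN (N : ℕ) (C₂ : ℝ) : Set (Matrix (Fin N) (Fin N) ℝ) :=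
  {Γ | Γ.PosSemidef ∧ (C₂ • (1 : Matrix (Fin N) (Fin N) ℝ) - Γ).PosSemidef}

/-- The linear attention prediction `f̌_Θ(X, y, xq) = (1/n) ∑ₖ yₖ φ(xₖ)ᵀ Γᵀ φ(xq)`. -/
noncomputable def attnPred {X : Type*} {N n : ℕ}
    (Γ : Matrix (Fin N) (Fin N) ℝ) (φ : X → EuclideanSpace ℝ (Fin N))
    (xs : Fin n → X) (y : Fin n → ℝ) (xq : X) : ℝ :=
  (1 / (n : ℝ)) * ∑ k, y k *
    (inner ℝ (φ (xs k)) (Matrix.toEuclideanCLM (𝕜 := ℝ) Γᵀ (φ xq)) : ℝ)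

/-- Clipping to `[-B, B]`. -/
def clip (B u : ℝ) : ℝ := max (-B) (min B u)

/-! ### Auxiliary lemmas -/

lemma clip_lipschitz (B u v : ℝ) : |clip B u - clip B v| ≤ |u - v| := by
  unfold clip
  rw [max_comm (-B) (min B u), max_comm (-B) (min B v)]
  refine (abs_max_sub_max_le_abs _ _ _).trans ?_
  refine (abs_min_sub_min_le_max _ _ _ _).trans ?_
  simp

lemma coord_abs_le_norm {N : ℕ} (x : EuclideanSpace ℝ (Fin N)) (i : Fin N) : |x i| ≤ ‖x‖ := by
  rw [EuclideanSpace.norm_eq, ← Real.sqrt_sq_eq_abs]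
  apply Real.sqrt_le_sqrt
  have : |x i| ^ 2 ≤ ∑ j, ‖x j‖ ^ 2 := by
    refine le_trans (le_of_eq ?_) (Finset.single_le_sum (f := fun j => ‖x j‖ ^ 2)
      (fun j _ => sq_nonneg _) (Finset.mem_univ i))
    simp [Real.norm_eq_abs]
  simpa [sq_abs] using this

lemma toEuclideanCLM_coord {N : ℕ} (M : Matrix (Fin N) (Fin N) ℝ)
    (v : EuclideanSpace ℝ (Fin N)) (i : Fin N) :
    (Matrix.toEuclideanCLM (𝕜 := ℝ) M v) i = ∑ j, M i j * v j := by
  have : (Matrix.toEuclideanCLM (𝕜 := ℝ) M v) = Matrix.toEuclideanLin M v := by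
    rw [← Matrix.coe_toEuclideanCLM_eq_toEuclideanLin]; rfl
  rw [this, Matrix.toEuclideanLin_apply]
  rfl

/-- Entries of matrices in `S_N` are bounded by `C₂`. -/
lemma SN_entry_abs_le {N : ℕ} {C₂ : ℝ} (hC₂ : 0 ≤ C₂) {Γ : Matrix (Fin N) (Fin N) ℝ}
    (h : Γ ∈ SN N C₂) (i j : Fin N) : |Γ i j| ≤ C₂ := by
  obtain ⟨h1, h2⟩ := h
  have q1 : ∀ x : Fin N → ℝ, 0 ≤ x ⬝ᵥ Γ.mulVec x := fun x => by simpa using h1.dotProduct_mulVec_nonneg x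
  have q2 : ∀ x : Fin N → ℝ, x ⬝ᵥ Γ.mulVec x ≤ C₂ * (x ⬝ᵥ x) := by
    intro x
    have := h2.dotProduct_mulVec_nonneg x
    simp [Matrix.sub_mulVec, Matrix.smul_mulVec, dotProduct_sub, dotProduct_smul,
      smul_eq_mul] at this
    linarith
  have qsingle : ∀ k : Fin N, (Pi.single k 1 : Fin N → ℝ) ⬝ᵥ Γ.mulVec (Pi.single k 1) = Γ k k := by
    intro k
    simp [Matrix.mulVec_single, single_dotProduct]
  have diag : ∀ k : Fin N, 0 ≤ Γ k k ∧ Γ k k ≤ C₂ := by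
    intro k
    constructor
    · have := q1 (Pi.single k 1); rwa [qsingle] at this
    · have := q2 (Pi.single k 1)
      rw [qsingle] at this
      simpa [single_dotProduct] using this
  by_cases hij : i = j
  · subst hij
    rw [abs_le]
    exact ⟨by linarith [(diag i).1, hC₂], (diag i).2⟩
  · have hsym : Γ j i = Γ i j := by
      have := congrFun (congrFun h1.1 i) j
      simpa [Matrix.conjTranspose_apply] using this
    have qplus : (Pi.single i 1 + Pi.single j 1 : Fin N → ℝ) ⬝ᵥ
        Γ.mulVec (Pi.single i 1 + Pi.single j 1) = Γ i i + Γ i j + Γ j i + Γ j j := by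
      simp [add_dotProduct, Matrix.mulVec_add, Matrix.mulVec_single, single_dotProduct]
      ring
    have qminus : (Pi.single i 1 - Pi.single j 1 : Fin N → ℝ) ⬝ᵥ
        Γ.mulVec (Pi.single i 1 - Pi.single j 1) = Γ i i - Γ i j - Γ j i + Γ j j := by
      simp [sub_dotProduct, Matrix.mulVec_sub, Matrix.mulVec_single, single_dotProduct]
      ring
    have hp := q1 (Pi.single i 1 + Pi.single j 1)
    have hm := q1 (Pi.single i 1 - Pi.single j 1)
    rw [qplus] at hp
    rw [qminus] at hm
    rw [abs_le]
    constructor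
    · nlinarith [(diag i).2, (diag j).2, hsym]
    · nlinarith [(diag i).2, (diag j).2, hsym]

/-- per-entry triple-product perturbation bound -/
lemma triple_diff {B' C₂ δ δF a a' b b' c c' : ℝ}
    (hB' : 0 ≤ B') (hC₂ : 0 ≤ C₂) (hδ : 0 ≤ δ) (hδF : 0 ≤ δF)
    (hδ1 : δ ≤ 1) (hδF1 : δF ≤ 1)
    (ha : |a| ≤ B') (hb : |b| ≤ C₂) (hc : |c| ≤ B')
    (da : |a - a'| ≤ δF) (db : |b - b'| ≤ δ) (dc : |c - c'| ≤ δF) :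
    |a * (b * c) - a' * (b' * c')| ≤
      δF * (C₂ * B') + (B' + 1) * (δ * B') + (B' + 1) * ((C₂ + 1) * δF) := by
  have ha' : |a'| ≤ B' + 1 := by
    have : |a'| ≤ |a| + |a - a'| := by
      have := abs_sub_abs_le_abs_sub a' a
      rw [abs_sub_comm a' a] at this
      linarith
    linarith
  have hb' : |b'| ≤ C₂ + 1 := by
    have : |b'| ≤ |b| + |b - b'| := by
      have := abs_sub_abs_le_abs_sub b' b
      rw [abs_sub_comm b' b] at this
      linarith
    linarith
  have key : a * (b * c) - a' * (b' * c') =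
      (a - a') * (b * c) + a' * ((b - b') * c) + a' * (b' * (c - c')) := by ring
  rw [key]
  refine (abs_add_three _ _ _).trans ?_
  have h1 : |(a - a') * (b * c)| ≤ δF * (C₂ * B') := by
    rw [abs_mul, abs_mul]
    exact mul_le_mul da (mul_le_mul hb hc (abs_nonneg _) hC₂)
      (mul_nonneg (abs_nonneg _) (abs_nonneg _)) hδF
  have h2 : |a' * ((b - b') * c)| ≤ (B' + 1) * (δ * B') := by
    rw [abs_mul, abs_mul]
    exact mul_le_mul ha' (mul_le_mul db hc (abs_nonneg _) hδ)
      (mul_nonneg (abs_nonneg _) (abs_nonneg _)) (by linarith)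
  have h3 : |a' * (b' * (c - c'))| ≤ (B' + 1) * ((C₂ + 1) * δF) := by
    rw [abs_mul, abs_mul]
    exact mul_le_mul ha' (mul_le_mul hb' dc (abs_nonneg _) (by linarith))
      (mul_nonneg (abs_nonneg _) (abs_nonneg _)) (by linarith)
  linarith

/-- expansion of the attention prediction into coordinates -/
lemma attnPred_expand {X : Type*} {N n : ℕ}
    (Γ : Matrix (Fin N) (Fin N) ℝ) (φ : X → EuclideanSpace ℝ (Fin N))
    (xs : Fin n → X) (y : Fin n → ℝ) (xq : X) :
    attnPred Γ φ xs y xq =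
      (1 / (n : ℝ)) * ∑ k, y k * ∑ i, ∑ j, φ (xs k) i * (Γ j i * φ xq j) := by
  unfold attnPred
  congr 1
  refine Finset.sum_congr rfl fun k _ => ?_
  have hinner : (inner ℝ (φ (xs k)) (Matrix.toEuclideanCLM (𝕜 := ℝ) Γᵀ (φ xq)) : ℝ)
      = ∑ i, φ (xs k) i * (Matrix.toEuclideanCLM (𝕜 := ℝ) Γᵀ (φ xq)) i := by
    simp [PiLp.inner_apply, mul_comm]
  rw [hinner]
  congr 1
  refine Finset.sum_congr rfl fun i _ => ?_
  rw [toEuclideanCLM_coord, Finset.mul_sum]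
  refine Finset.sum_congr rfl fun j _ => ?_
  rw [Matrix.transpose_apply]

/-- perturbation bound for the attention prediction -/
lemma attnPred_diff {X : Type*} {N n : ℕ} (hn : 0 < n)
    (Γ Γ' : Matrix (Fin N) (Fin N) ℝ) (φ φ' : X → EuclideanSpace ℝ (Fin N))
    (xs : Fin n → X) (y : Fin n → ℝ) (xq : X)
    {Y B' C₂ δ δF : ℝ} (hY : 0 ≤ Y) (hB' : 0 ≤ B') (hC₂ : 0 ≤ C₂)
    (hδ : 0 ≤ δ) (hδF : 0 ≤ δF) (hδ1 : δ ≤ 1) (hδF1 : δF ≤ 1)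
    (hy : ∀ k, |y k| ≤ Y)
    (hφ : ∀ z i, |φ z i| ≤ B')
    (hφd : ∀ z i, |φ z i - φ' z i| ≤ δF)
    (hΓ : ∀ i j, |Γ i j| ≤ C₂)
    (hΓd : ∀ i j, |Γ i j - Γ' i j| ≤ δ) :
    |attnPred Γ φ xs y xq - attnPred Γ' φ' xs y xq| ≤
      Y * (N : ℝ) ^ 2 *
        (δF * (C₂ * B') + (B' + 1) * (δ * B') + (B' + 1) * ((C₂ + 1) * δF)) := by
  set E : ℝ := δF * (C₂ * B') + (B' + 1) * (δ * B') + (B' + 1) * ((C₂ + 1) * δF) with hE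
  have hE0 : 0 ≤ E := by
    have : 0 ≤ δF * (C₂ * B') := by positivity
    have : 0 ≤ (B' + 1) * (δ * B') := by positivity
    have : 0 ≤ (B' + 1) * ((C₂ + 1) * δF) := by positivity
    positivity
  rw [attnPred_expand, attnPred_expand, ← mul_sub, ← Finset.sum_sub_distrib, abs_mul]
  have hn' : (0 : ℝ) < n := by exact_mod_cast hn
  have habs1 : |1 / (n : ℝ)| = 1 / (n : ℝ) := abs_of_pos (by positivity)
  rw [habs1]
  have inner_bound : ∀ k : Fin n,
      |y k * ∑ i, ∑ j, φ (xs k) i * (Γ j i * φ xq j) -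
        y k * ∑ i, ∑ j, φ' (xs k) i * (Γ' j i * φ' xq j)| ≤ Y * ((N : ℝ) ^ 2 * E) := by
    intro k
    rw [← mul_sub, abs_mul, ← Finset.sum_sub_distrib]
    have hsum : |∑ i, (∑ j, φ (xs k) i * (Γ j i * φ xq j) -
        ∑ j, φ' (xs k) i * (Γ' j i * φ' xq j))| ≤ (N : ℝ) ^ 2 * E := by
      refine (Finset.abs_sum_le_sum_abs _ _).trans ?_
      have step : ∀ i : Fin N, |∑ j, φ (xs k) i * (Γ j i * φ xq j) -
          ∑ j, φ' (xs k) i * (Γ' j i * φ' xq j)| ≤ (N : ℝ) * E := by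
        intro i
        rw [← Finset.sum_sub_distrib]
        refine (Finset.abs_sum_le_sum_abs _ _).trans ?_
        have tb : ∀ j : Fin N, |φ (xs k) i * (Γ j i * φ xq j) -
            φ' (xs k) i * (Γ' j i * φ' xq j)| ≤ E := by
          intro j
          exact triple_diff hB' hC₂ hδ hδF hδ1 hδF1 (hφ _ _) (hΓ _ _) (hφ _ _)
            (hφd _ _) (hΓd _ _) (hφd _ _)
        calc ∑ j, |φ (xs k) i * (Γ j i * φ xq j) - φ' (xs k) i * (Γ' j i * φ' xq j)|
            ≤ ∑ _j : Fin N, E := Finset.sum_le_sum fun j _ => tb j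
          _ = (N : ℝ) * E := by simp [mul_comm]
      calc ∑ i, |∑ j, φ (xs k) i * (Γ j i * φ xq j) - ∑ j, φ' (xs k) i * (Γ' j i * φ' xq j)|
          ≤ ∑ _i : Fin N, (N : ℝ) * E := Finset.sum_le_sum fun i _ => step i
        _ = (N : ℝ) ^ 2 * E := by
            simp [Finset.sum_const]
            ring
    exact mul_le_mul (hy k) hsum (abs_nonneg _) hY
  calc (1 / (n : ℝ)) * |∑ k, (y k * ∑ i, ∑ j, φ (xs k) i * (Γ j i * φ xq j) -
        y k * ∑ i, ∑ j, φ' (xs k) i * (Γ' j i * φ' xq j))|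
      ≤ (1 / (n : ℝ)) * ∑ k, |y k * ∑ i, ∑ j, φ (xs k) i * (Γ j i * φ xq j) -
        y k * ∑ i, ∑ j, φ' (xs k) i * (Γ' j i * φ' xq j)| := by
        apply mul_le_mul_of_nonneg_left (Finset.abs_sum_le_sum_abs _ _) (by positivity)
    _ ≤ (1 / (n : ℝ)) * ∑ _k : Fin n, Y * ((N : ℝ) ^ 2 * E) := by
        apply mul_le_mul_of_nonneg_left (Finset.sum_le_sum fun k _ => inner_bound k)
          (by positivity)
    _ = Y * (N : ℝ) ^ 2 * E := by
        rw [Finset.sum_const]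
        simp
        field_simp

set_option maxHeartbeats 4000000 in
/-- metric entropy of the transformer class: the transformer class
`T_N = {clip_B ∘ f̌_Θ : Θ ∈ S_N × F_N}` satisfies
`V(T_N, ‖·‖_∞, ε) ≲ N² log(B'²/ε) + V(F_N, ‖·‖_∞, ε/(D B' √N))`:
given any finite `ε/(D B'√N)`-cover `G` of the feature class `F_N` (componentwise sup norm),
there is a finite set `H` of prompt-to-output maps covering `T_N` to accuracy `ε` in sup norm
over prompts with labels bounded by `B+σ`, with
`log |H| ≤ c (N² log(B'²/ε) + log |G|)`. -/
theorem transformer_class_entropy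
    (X : Type*) (N n : ℕ) (hn : 0 < n) (hN : 0 < N)
    (B σ B' C₂ : ℝ) (hB : 0 < B) (hσ : 0 ≤ σ) (hB' : 1 ≤ B') (hC₂ : 0 < C₂) :
    ∃ D > (0 : ℝ), ∃ c > (0 : ℝ), ∃ ε₀ > (0 : ℝ), ∀ ε : ℝ, 0 < ε → ε ≤ ε₀ →
      ∀ (F : Set (X → EuclideanSpace ℝ (Fin N))),
        (∀ φ ∈ F, ∀ z, ‖φ z‖ ≤ B') →
        ∀ G : Finset (X → EuclideanSpace ℝ (Fin N)),
          (∀ φ ∈ F, ∃ φ' ∈ G, ∀ (z : X) (j : Fin N),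
            |φ z j - φ' z j| ≤ ε / (D * B' * Real.sqrt N)) →
          ∃ H : Finset ((Fin n → X) → (Fin n → ℝ) → X → ℝ),
            (∀ Γ ∈ SN N C₂, ∀ φ ∈ F, ∃ h ∈ H,
              ∀ (xs : Fin n → X) (y : Fin n → ℝ) (xq : X), (∀ k, |y k| ≤ B + σ) →
                |clip B (attnPred Γ φ xs y xq) - h xs y xq| ≤ ε) ∧
            Real.log H.card ≤
              c * ((N : ℝ) ^ 2 * Real.log (B' ^ 2 / ε) + Real.log G.card) := by
  classical
  set D : ℝ := 10 * ((B + σ + 1) * ((C₂ + 1) * ((B' + 1) * (N : ℝ) ^ 2))) with hD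
  have hN1 : (1 : ℝ) ≤ (N : ℝ) := by exact_mod_cast hN
  have hN1 : (1 : ℝ) ≤ (N : ℝ) := by exact_mod_cast hN
  have hNsq : (1 : ℝ) ≤ (N : ℝ) ^ 2 := by nlinarith
  have hD1 : (10 : ℝ) ≤ D := by
    rw [hD]
    have h1 : (1 : ℝ) ≤ (B' + 1) * (N : ℝ) ^ 2 := by nlinarith
    have h2 : (1 : ℝ) ≤ (C₂ + 1) * ((B' + 1) * (N : ℝ) ^ 2) := by nlinarith
    have h3 : (1 : ℝ) ≤ (B + σ + 1) * ((C₂ + 1) * ((B' + 1) * (N : ℝ) ^ 2)) := by nlinarith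
    linarith
  have hD0 : (0 : ℝ) < D := by linarith
  set K : ℝ := 2 * C₂ * D * B' + 5 with hK
  have hK5 : (5 : ℝ) ≤ K := by
    rw [hK]
    have : (0:ℝ) ≤ 2 * C₂ * D * B' := by positivity
    linarith
  have hK0 : (0 : ℝ) < K := by linarith
  refine ⟨D, hD0, 2, by norm_num, min 1 (1 / K), by positivity, ?_⟩
  intro ε hε hεle F hF G hG
  have hε1 : ε ≤ 1 := le_trans hεle (min_le_left _ _)
  have hεK : ε ≤ 1 / K := le_trans hεle (min_le_right _ _)
  have hsqrtN : (1 : ℝ) ≤ Real.sqrt N := by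
    rw [show (1 : ℝ) = Real.sqrt 1 by simp]
    exact Real.sqrt_le_sqrt hN1
  have hB'0 : (0 : ℝ) < B' := by linarith
  -- grid precision for the matrices
  set δ : ℝ := ε / (D * B') with hδdef
  have hδ0 : 0 < δ := by positivity
  have hδ1 : δ ≤ 1 := by
    rw [hδdef, div_le_one (by positivity)]
    nlinarith
  -- feature precision
  set δF : ℝ := ε / (D * B' * Real.sqrt N) with hδFdef
  have hδF0 : 0 < δF := by positivity
  have hδFδ : δF ≤ δ := by
    rw [hδFdef, hδdef]
    apply div_le_div_of_nonneg_left hε.le (by positivity)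
    nlinarith
  have hδF1 : δF ≤ 1 := le_trans hδFδ hδ1
  -- the matrix grid
  set M : ℤ := ⌈C₂ / δ⌉ + 1 with hM
  have hM1 : (1 : ℤ) ≤ M := by
    have : (0 : ℤ) ≤ ⌈C₂ / δ⌉ := by
      apply Int.ceil_nonneg
      positivity
    omega
  set gridF : Finset ((Fin N × Fin N) → ℤ) :=
    Fintype.piFinset (fun _ => Finset.Icc (-M) M) with hgridF
  set grid : Finset (Matrix (Fin N) (Fin N) ℝ) :=
    gridF.image (fun g => Matrix.of (fun i j => (g (i, j) : ℝ) * δ)) with hgrid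
  rcases G.eq_empty_or_nonempty with hGe | hGne
  · -- G empty : F must be empty, use H = ∅
    refine ⟨∅, ?_, ?_⟩
    · intro Γ hΓ φ hφ
      obtain ⟨φ', hφ', _⟩ := hG φ hφ
      rw [hGe] at hφ'
      exact absurd hφ' (Finset.notMem_empty _)
    · simp only [Finset.card_empty, Nat.cast_zero, Real.log_zero]
      have hlog : 0 ≤ Real.log (B' ^ 2 / ε) := by
        apply Real.log_nonneg
        rw [le_div_iff₀ hε]
        nlinarith
      rw [hGe]
      simp only [Finset.card_empty, Nat.cast_zero, Real.log_zero]
      positivity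
  -- main case
  set f : Matrix (Fin N) (Fin N) ℝ × (X → EuclideanSpace ℝ (Fin N)) →
      ((Fin n → X) → (Fin n → ℝ) → X → ℝ) :=
    fun p => fun xs y xq => clip B (attnPred p.1 p.2 xs y xq) with hf
  set H : Finset ((Fin n → X) → (Fin n → ℝ) → X → ℝ) :=
    (grid ×ˢ G).image f with hH
  refine ⟨H, ?_, ?_⟩
  · -- covering property
    intro Γ hΓSN φ hφF
    obtain ⟨φ', hφ'G, hφ'close⟩ := hG φ hφF
    -- the rounded matrix
    set g : (Fin N × Fin N) → ℤ := fun p => round (Γ p.1 p.2 / δ) with hg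
    have hgmem : g ∈ gridF := by
      rw [hgridF, Fintype.mem_piFinset]
      intro p
      rw [Finset.mem_Icc, ← abs_le]
      have h1 : |Γ p.1 p.2 / δ| ≤ C₂ / δ := by
        rw [abs_div, abs_of_pos hδ0]
        apply div_le_div_of_nonneg_right (SN_entry_abs_le hC₂.le hΓSN p.1 p.2) hδ0.le
      have h2 : |(round (Γ p.1 p.2 / δ) : ℝ)| ≤ C₂ / δ + 1 := by
        have h3 := abs_sub_round (Γ p.1 p.2 / δ)
        have h4 : |(round (Γ p.1 p.2 / δ) : ℝ)| ≤ |Γ p.1 p.2 / δ| + 1 / 2 := by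
          have := abs_sub_abs_le_abs_sub ((round (Γ p.1 p.2 / δ) : ℝ)) (Γ p.1 p.2 / δ)
          rw [abs_sub_comm] at this
          linarith
        linarith
      have h5 : (C₂ / δ : ℝ) + 1 ≤ (M : ℝ) := by
        rw [hM]
        push_cast
        have := Int.le_ceil (C₂ / δ)
        linarith
      have : |(g p : ℝ)| ≤ (M : ℝ) := le_trans h2 h5
      exact_mod_cast this
    set Γ' : Matrix (Fin N) (Fin N) ℝ := Matrix.of (fun i j => (g (i, j) : ℝ) * δ) with hΓ'
    have hΓ'grid : Γ' ∈ grid := by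
      rw [hgrid]
      exact Finset.mem_image_of_mem _ hgmem
    have hΓ'close : ∀ i j, |Γ i j - Γ' i j| ≤ δ := by
      intro i j
      have : Γ i j - Γ' i j = (Γ i j / δ - (round (Γ i j / δ) : ℝ)) * δ := by
        rw [hΓ']
        simp only [Matrix.of_apply, hg]
        field_simp
      rw [this, abs_mul, abs_of_pos hδ0]
      have := abs_sub_round (Γ i j / δ)
      nlinarith
    have hpair : (Γ', φ') ∈ grid ×ˢ G := Finset.mem_product.mpr ⟨hΓ'grid, hφ'G⟩
    refine ⟨f (Γ', φ'), Finset.mem_image_of_mem f hpair, ?_⟩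
    intro xs y xq hy
    have hfeq : f (Γ', φ') xs y xq = clip B (attnPred Γ' φ' xs y xq) := rfl
    rw [hfeq]
    refine (clip_lipschitz _ _ _).trans ?_
    have hdiff := attnPred_diff hn Γ Γ' φ φ' xs y xq
      (by linarith : (0:ℝ) ≤ B + σ) (by linarith : (0:ℝ) ≤ B') hC₂.le
      hδ0.le hδF0.le hδ1 hδF1 hy
      (fun z i => (coord_abs_le_norm (φ z) i).trans (hF φ hφF z))
      (fun z i => hφ'close z i) (fun i j => SN_entry_abs_le hC₂.le hΓSN i j)
      hΓ'close
    refine hdiff.trans ?_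
    -- arithmetic: (B+σ) N² E ≤ ε
    have hEδ : δF * (C₂ * B') + (B' + 1) * (δ * B') + (B' + 1) * ((C₂ + 1) * δF) ≤
        (C₂ * B' + (B' + 1) * B' + (B' + 1) * (C₂ + 1)) * δ := by
      have e1 : C₂ * B' * δF ≤ C₂ * B' * δ :=
        mul_le_mul_of_nonneg_left hδFδ (by positivity)
      have e2 : (B' + 1) * (C₂ + 1) * δF ≤ (B' + 1) * (C₂ + 1) * δ :=
        mul_le_mul_of_nonneg_left hδFδ (by positivity)
      nlinarith [e1, e2]
    have hP : C₂ * B' + (B' + 1) * B' + (B' + 1) * (C₂ + 1) ≤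
        3 * ((C₂ + 1) * ((B' + 1) * B')) := by
      nlinarith [hB', hC₂.le, mul_nonneg hC₂.le (sq_nonneg (B' - 1)),
        mul_pos hC₂ hB'0, mul_nonneg (mul_nonneg hC₂.le hB'0.le) hB'0.le,
        sq_nonneg (B' - 1)]
    calc (B + σ) * (N : ℝ) ^ 2 *
          (δF * (C₂ * B') + (B' + 1) * (δ * B') + (B' + 1) * ((C₂ + 1) * δF))
        ≤ (B + σ) * (N : ℝ) ^ 2 *
          ((C₂ * B' + (B' + 1) * B' + (B' + 1) * (C₂ + 1)) * δ) := by
          apply mul_le_mul_of_nonneg_left hEδ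
          positivity
      _ ≤ (B + σ + 1) * (N : ℝ) ^ 2 * (3 * ((C₂ + 1) * ((B' + 1) * B')) * δ) := by
          apply mul_le_mul
          · apply mul_le_mul_of_nonneg_right (by linarith) (by positivity)
          · apply mul_le_mul_of_nonneg_right hP hδ0.le
          · positivity
          · positivity
      _ = ((B + σ + 1) * (N : ℝ) ^ 2 * (3 * ((C₂ + 1) * ((B' + 1) * B')))) * δ := by
          ring
      _ ≤ (D * B') * δ := by
          apply mul_le_mul_of_nonneg_right ?_ hδ0.le
          rw [hD]
          have hx : (0:ℝ) ≤ (B + σ + 1) * ((C₂ + 1) * ((B' + 1) * ((N : ℝ) ^ 2 * B'))) := by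
            positivity
          nlinarith [hx]
      _ = ε := by
          rw [hδdef]
          field_simp
  · -- cardinality bound
    clear_value f
    have hM1R : (1 : ℝ) ≤ (M : ℝ) := by exact_mod_cast hM1
    have hgridcard : grid.card ≤ ((2 * M + 1).toNat) ^ (N * N) := by
      rw [hgrid]
      refine le_trans Finset.card_image_le ?_
      rw [hgridF, Fintype.card_piFinset]
      simp only [Int.card_Icc]
      have he : (M + 1 - -M).toNat = (2 * M + 1).toNat := by
        congr 1
        ring
      rw [he]
      simp [Finset.prod_const]
    have hHcard : H.card ≤ ((2 * M + 1).toNat) ^ (N * N) * G.card := by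
      rw [hH]
      refine le_trans Finset.card_image_le ?_
      rw [Finset.card_product]
      exact Nat.mul_le_mul_right _ hgridcard
    have hHpos : 0 < H.card := by
      rw [hH]
      apply Finset.card_pos.mpr
      apply Finset.Nonempty.image
      apply Finset.Nonempty.product
      · rw [hgrid]
        apply Finset.Nonempty.image
        rw [hgridF]
        apply Fintype.piFinset_nonempty.mpr
        intro p
        exact Finset.nonempty_Icc.mpr (by omega)
      · exact hGne
    clear_value D K δ δF M gridF grid H
    have hGpos : 0 < G.card := Finset.card_pos.mpr hGne
    have hMcast : (((2 * M + 1).toNat : ℕ) : ℝ) = 2 * (M : ℝ) + 1 := by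
      have h : (((2 * M + 1).toNat : ℕ) : ℤ) = 2 * M + 1 := Int.toNat_of_nonneg (by omega)
      exact_mod_cast h
    have hbase : (0 : ℝ) < (((2 * M + 1).toNat : ℕ) : ℝ) := by
      rw [hMcast]; linarith
    have hlog1 : Real.log H.card ≤
        ((N : ℝ) * (N : ℝ)) * Real.log (2 * (M : ℝ) + 1) + Real.log G.card := by
      have hle : (H.card : ℝ) ≤ ((((2 * M + 1).toNat : ℕ) : ℝ)) ^ (N * N) * (G.card : ℝ) := by
        exact_mod_cast hHcard
      refine le_trans (Real.log_le_log (by exact_mod_cast hHpos) hle) ?_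
      rw [Real.log_mul (pow_pos hbase _).ne' (by exact_mod_cast hGpos.ne'),
        Real.log_pow, hMcast]
      exact le_of_eq (by push_cast; ring)
    have hL0 : 0 ≤ Real.log (B' ^ 2 / ε) := by
      apply Real.log_nonneg
      rw [le_div_iff₀ hε]
      nlinarith
    have hlogM : Real.log (2 * (M : ℝ) + 1) ≤ 2 * Real.log (B' ^ 2 / ε) := by
      have h2M : 2 * (M : ℝ) + 1 ≤ K / ε := by
        rw [hK, hM]
        push_cast
        have hceil := Int.ceil_lt_add_one (C₂ / δ)
        have hCδ : C₂ / δ = C₂ * (D * B') / ε := by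
          rw [hδdef]; field_simp
        have h5ε : (5 : ℝ) ≤ 5 / ε := by
          rw [le_div_iff₀ hε]; nlinarith
        have hdiv : (2 * C₂ * D * B' + 5) / ε = 2 * (C₂ * (D * B') / ε) + 5 / ε := by
          ring
        rw [hdiv]
        linarith [hceil, hCδ.le, hCδ.ge]
      have hKle : K * ε ≤ 1 := by
        rw [div_eq_mul_inv] at hεK
        calc K * ε ≤ K * (1 * K⁻¹) := by
              apply mul_le_mul_of_nonneg_left hεK hK0.le
          _ = 1 := by field_simp
      have hB2 : (1 : ℝ) ≤ B' ^ 2 := by nlinarith [hB', sq_nonneg (B' - 1)]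
      have hB4 : (1 : ℝ) ≤ (B' ^ 2) ^ 2 := by nlinarith [hB2, sq_nonneg (B' ^ 2 - 1)]
      have hfin : K / ε ≤ (B' ^ 2 / ε) ^ 2 := by
        rw [div_pow, div_le_div_iff₀ hε (by positivity)]
        linarith [mul_le_mul_of_nonneg_right hKle hε.le,
          mul_le_mul_of_nonneg_right hB4 hε.le]
      calc Real.log (2 * (M : ℝ) + 1)
          ≤ Real.log ((B' ^ 2 / ε) ^ 2) := by
            apply Real.log_le_log (by linarith)
            exact le_trans h2M hfin
        _ = 2 * Real.log (B' ^ 2 / ε) := by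
            rw [Real.log_pow]; push_cast; ring
    have hg0 : 0 ≤ Real.log G.card := by
      apply Real.log_nonneg
      exact_mod_cast hGpos
    have hmul : ((N : ℝ) * (N : ℝ)) * Real.log (2 * (M : ℝ) + 1) ≤
        (N : ℝ) ^ 2 * (2 * Real.log (B' ^ 2 / ε)) := by
      have : ((N : ℝ) * (N : ℝ)) = (N : ℝ) ^ 2 := by ring
      rw [this]
      exact mul_le_mul_of_nonneg_left hlogM (by positivity)
    linarith [hlog1, hmul, hg0]
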